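/- arXiv:2009.01504 — 5 statements merged into one kernel-verified Lean document; each statement's English description precedes it below -/
import Mathlib

section
/- For every real α with 1 < α < 2, the series B_∞ = Σ_{m=1}^∞ B_{m,1}/m! converges, and for all integers n ≥ 1 and 1 ≤ k ≤ n one has the two inequalities B_{n,k}/n! ≤ (B_∞)^k/k! and (B_∞)^k/k! ≤ (1/4)^k/k!. -/
open scoped Real BigOperators
open MeasureTheory Filter Asymptotics

/-- `B_{n,1} = (2-α)_{n-1} / ((n+1)(n+2))`, where `(x)_m` is the rising factorial. -/
noncomputable def B1 (α : ℝ) (n : ℕ) : ℝ :=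
  (ascPochhammer ℝ (n - 1)).eval (2 - α) / ((n + 1 : ℝ) * (n + 2 : ℝ))

/-- The coefficients `B_{n,k}`: `B_{n,1}` as above and
`B_{n,k+1} = (1/(k+1)) Σ_{l=k}^{n-1} C(n,l) B_{n-l,1} B_{l,k}` for `k ≥ 1`. -/
noncomputable def Bc (α : ℝ) : ℕ → ℕ → ℝ
  | _, 0 => 0
  | n, 1 => B1 α n
  | n, (k + 2) =>
      (1 / (k + 2 : ℝ)) *
        ∑ l ∈ Finset.Icc (k + 1) (n - 1),
          (n.choose l : ℝ) * B1 α (n - l) * Bc α l (k + 1)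

lemma asc_le_factorial {x : ℝ} (hx0 : 0 < x) (hx1 : x ≤ 1) (n : ℕ) :
    (ascPochhammer ℝ n).eval x ≤ n.factorial := by
  induction n with
  | zero => simp
  | succ n ih =>
    rw [ascPochhammer_succ_eval, Nat.factorial_succ]
    push_cast
    have h1 : (0:ℝ) < (ascPochhammer ℝ n).eval x := ascPochhammer_pos n x hx0
    have h2 : x + n ≤ 1 + n := by linarith
    have h3 : (0:ℝ) ≤ x + n := by positivity
    calc (ascPochhammer ℝ n).eval x * (x + n) ≤ (n.factorial : ℝ) * (1 + n) :=
          mul_le_mul ih h2 h3 (by positivity)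
      _ = (n + 1) * n.factorial := by ring

lemma B1_nonneg {α : ℝ} (hα₂ : α < 2) (n : ℕ) : 0 ≤ B1 α n := by
  have := ascPochhammer_pos (n - 1) (2 - α) (by linarith)
  have h2 : (0:ℝ) < ((n:ℝ) + 1) * ((n:ℝ) + 2) := by positivity
  exact le_of_lt (div_pos this h2)

lemma B1_div_le {α : ℝ} (hα₁ : 1 < α) (hα₂ : α < 2) (m : ℕ) :
    B1 α (m + 1) / (m + 1).factorial ≤ 1 / (((m:ℝ) + 1) * ((m:ℝ) + 2) * ((m:ℝ) + 3)) := by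
  have hasc : (ascPochhammer ℝ m).eval (2 - α) ≤ m.factorial :=
    asc_le_factorial (by linarith) (by linarith) m
  have hpos : (0:ℝ) < (ascPochhammer ℝ m).eval (2 - α) :=
    ascPochhammer_pos m (2 - α) (by linarith)
  have hfac : ((m + 1).factorial : ℝ) = ((m:ℝ) + 1) * m.factorial := by
    rw [Nat.factorial_succ]; push_cast; ring
  have hfpos : (0:ℝ) < (m.factorial : ℝ) := by positivity
  unfold B1
  simp only [Nat.add_sub_cancel]
  rw [div_div, hfac]
  rw [div_le_div_iff₀ (by push_cast; positivity) (by positivity)]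
  push_cast
  nlinarith [mul_pos hfpos hpos, hfpos, hpos,
    mul_le_mul_of_nonneg_right hasc (le_of_lt (show (0:ℝ) < ((m:ℝ)+1)*((m:ℝ)+2)*((m:ℝ)+3) by positivity))]

lemma tele_sum_le (N : ℕ) :
    ∑ m ∈ Finset.range N, 1 / (((m:ℝ) + 1) * ((m:ℝ) + 2) * ((m:ℝ) + 3)) ≤ 1 / 4 := by
  have key : ∀ m : ℕ, 1 / (((m:ℝ) + 1) * ((m:ℝ) + 2) * ((m:ℝ) + 3)) =
      (fun j : ℕ => 1 / (2 * ((j:ℝ) + 1) * ((j:ℝ) + 2))) m -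
      (fun j : ℕ => 1 / (2 * ((j:ℝ) + 1) * ((j:ℝ) + 2))) (m + 1) := by
    intro m
    have h1 : ((m:ℝ) + 1) > 0 := by positivity
    have h2 : ((m:ℝ) + 2) > 0 := by positivity
    have h3 : ((m:ℝ) + 3) > 0 := by positivity
    simp only
    push_cast
    field_simp
    ring
  calc ∑ m ∈ Finset.range N, 1 / (((m:ℝ) + 1) * ((m:ℝ) + 2) * ((m:ℝ) + 3))
      = ∑ m ∈ Finset.range N, ((fun j : ℕ => 1 / (2 * ((j:ℝ) + 1) * ((j:ℝ) + 2))) m -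
          (fun j : ℕ => 1 / (2 * ((j:ℝ) + 1) * ((j:ℝ) + 2))) (m + 1)) :=
        Finset.sum_congr rfl fun m _ => key m
    _ = (fun j : ℕ => 1 / (2 * ((j:ℝ) + 1) * ((j:ℝ) + 2))) 0 -
          (fun j : ℕ => 1 / (2 * ((j:ℝ) + 1) * ((j:ℝ) + 2))) N :=
        Finset.sum_range_sub' (fun j : ℕ => 1 / (2 * ((j:ℝ) + 1) * ((j:ℝ) + 2))) N
    _ ≤ 1 / 4 := by
        simp only [Nat.cast_zero]
        norm_num
        positivity

/-- For `1 < α < 2`, the series `B_∞ = Σ_{m≥1} B_{m,1}/m!` converges, and for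
all `n ≥ 1` and `1 ≤ k ≤ n` one has `B_{n,k}/n! ≤ B_∞^k/k!` and `B_∞^k/k! ≤ (1/4)^k/k!`. -/
theorem Bck_le_Binfty (α : ℝ) (hα₁ : 1 < α) (hα₂ : α < 2) :
    Summable (fun m : ℕ => Bc α (m + 1) 1 / (m + 1).factorial) ∧
    ∀ n k : ℕ, 1 ≤ n → 1 ≤ k → k ≤ n →
      Bc α n k / n.factorial ≤
          (∑' m : ℕ, Bc α (m + 1) 1 / (m + 1).factorial) ^ k / k.factorial ∧
      (∑' m : ℕ, Bc α (m + 1) 1 / (m + 1).factorial) ^ k / k.factorial ≤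
          (1 / 4 : ℝ) ^ k / k.factorial := by
  set g : ℕ → ℝ := fun m => Bc α (m + 1) 1 / (m + 1).factorial with hg
  have hBc1 : ∀ n : ℕ, Bc α n 1 = B1 α n := fun n => rfl
  have hg_nonneg : ∀ m, 0 ≤ g m := by
    intro m
    simp only [hg, hBc1]
    exact div_nonneg (B1_nonneg hα₂ _) (by positivity)
  have hg_le : ∀ m, g m ≤ 1 / (((m:ℝ) + 1) * ((m:ℝ) + 2) * ((m:ℝ) + 3)) := by
    intro m
    simp only [hg, hBc1]
    exact B1_div_le hα₁ hα₂ m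
  have hsum_range : ∀ N, ∑ m ∈ Finset.range N, g m ≤ 1 / 4 := by
    intro N
    calc ∑ m ∈ Finset.range N, g m
        ≤ ∑ m ∈ Finset.range N, 1 / (((m:ℝ) + 1) * ((m:ℝ) + 2) * ((m:ℝ) + 3)) :=
          Finset.sum_le_sum fun m _ => hg_le m
      _ ≤ 1 / 4 := tele_sum_le N
  have hsum : Summable g := summable_of_sum_range_le hg_nonneg hsum_range
  have hB_le : (∑' m, g m) ≤ 1 / 4 := Real.tsum_le_of_sum_range_le hg_nonneg hsum_range
  have hB_nonneg : 0 ≤ ∑' m, g m := tsum_nonneg hg_nonneg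
  set B := ∑' m, g m with hBdef
  -- sum of B1 terms over any finset of positive indices is ≤ B
  have sum_g_le : ∀ s : Finset ℕ, (∀ m ∈ s, 1 ≤ m) →
      ∑ m ∈ s, B1 α m / m.factorial ≤ B := by
    intro s hs
    have hinj : ∀ x ∈ s, ∀ y ∈ s, x - 1 = y - 1 → x = y := by
      intro x hx y hy hxy
      have h1 := hs x hx; have h2 := hs y hy
      omega
    have heq : ∑ j ∈ s.image (· - 1), g j = ∑ m ∈ s, B1 α m / m.factorial := by
      rw [Finset.sum_image hinj]
      refine Finset.sum_congr rfl fun m hm => ?_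
      have h1 := hs m hm
      have h2 : m - 1 + 1 = m := Nat.succ_pred_eq_of_pos h1
      simp only [hg, hBc1, h2]
    rw [← heq]
    exact Summable.sum_le_tsum _ (fun i _ => hg_nonneg i) hsum
  have main : ∀ k, 1 ≤ k → ∀ n, k ≤ n → Bc α n k / n.factorial ≤ B ^ k / k.factorial := by
    intro k hk
    induction k, hk using Nat.le_induction with
    | base =>
      intro n hn
      obtain ⟨m, rfl⟩ : ∃ m, n = m + 1 := ⟨n - 1, by omega⟩
      have := Summable.le_tsum hsum m (fun j _ => hg_nonneg j)
      simpa [pow_one, Nat.factorial_one] using this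
    | succ k hk ih =>
      intro n hn
      obtain ⟨j, rfl⟩ : ∃ j, k = j + 1 := ⟨k - 1, by omega⟩
      have hBc : Bc α n (j + 1 + 1) = (1 / ((j:ℝ) + 2)) *
          ∑ l ∈ Finset.Icc (j + 1) (n - 1),
            (n.choose l : ℝ) * B1 α (n - l) * Bc α l (j + 1) := by
        show Bc α n (j + 2) = _
        rw [Bc]
      have hterm : ∀ l ∈ Finset.Icc (j + 1) (n - 1),
          ((n.choose l : ℝ) * B1 α (n - l) * Bc α l (j + 1)) / n.factorial ≤
            (B1 α (n - l) / (n - l).factorial) * (B ^ (j + 1) / (j + 1).factorial) := by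
        intro l hl
        simp only [Finset.mem_Icc] at hl
        have hln : l ≤ n := by omega
        have hchoose : (n.factorial : ℝ) = (n.choose l : ℝ) * l.factorial * (n - l).factorial := by
          rw [← Nat.choose_mul_factorial_mul_factorial hln]; push_cast; ring
        have h1 : ((n.choose l : ℝ) * B1 α (n - l) * Bc α l (j + 1)) / n.factorial =
            (B1 α (n - l) / (n - l).factorial) * (Bc α l (j + 1) / l.factorial) := by
          rw [hchoose]
          have hc : (0:ℝ) < (n.choose l : ℝ) := by
            exact_mod_cast Nat.cast_pos.mpr (Nat.choose_pos hln)
          have hf1 : (0:ℝ) < (l.factorial : ℝ) := by positivity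
          have hf2 : (0:ℝ) < ((n - l).factorial : ℝ) := by positivity
          field_simp
        rw [h1]
        exact mul_le_mul_of_nonneg_left (ih l hl.1)
          (div_nonneg (B1_nonneg hα₂ _) (by positivity))
      have hsum_bound : ∑ l ∈ Finset.Icc (j + 1) (n - 1), B1 α (n - l) / (n - l).factorial ≤ B := by
        have hinj : ∀ x ∈ Finset.Icc (j + 1) (n - 1), ∀ y ∈ Finset.Icc (j + 1) (n - 1),
            n - x = n - y → x = y := by
          intro x hx y hy hxy
          simp only [Finset.mem_Icc] at hx hy
          omega
        have heq : ∑ m ∈ (Finset.Icc (j + 1) (n - 1)).image (n - ·), B1 α m / m.factorial =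
            ∑ l ∈ Finset.Icc (j + 1) (n - 1), B1 α (n - l) / (n - l).factorial :=
          Finset.sum_image hinj
        rw [← heq]
        apply sum_g_le
        intro m hm
        simp only [Finset.mem_image, Finset.mem_Icc] at hm
        obtain ⟨l, hl, rfl⟩ := hm
        show 1 ≤ n - l
        omega
      calc Bc α n (j + 1 + 1) / n.factorial
          = (1 / ((j:ℝ) + 2)) *
            ∑ l ∈ Finset.Icc (j + 1) (n - 1),
              ((n.choose l : ℝ) * B1 α (n - l) * Bc α l (j + 1)) / n.factorial := by
            rw [hBc, mul_div_assoc, Finset.sum_div]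
        _ ≤ (1 / ((j:ℝ) + 2)) *
            ∑ l ∈ Finset.Icc (j + 1) (n - 1),
              (B1 α (n - l) / (n - l).factorial) * (B ^ (j + 1) / (j + 1).factorial) := by
            apply mul_le_mul_of_nonneg_left (Finset.sum_le_sum hterm) (by positivity)
        _ = (1 / ((j:ℝ) + 2)) * (B ^ (j + 1) / (j + 1).factorial) *
              ∑ l ∈ Finset.Icc (j + 1) (n - 1), B1 α (n - l) / (n - l).factorial := by
            rw [← Finset.sum_mul]; ring
        _ ≤ (1 / ((j:ℝ) + 2)) * (B ^ (j + 1) / (j + 1).factorial) * B := by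
            apply mul_le_mul_of_nonneg_left hsum_bound
            positivity
        _ = B ^ (j + 1 + 1) / (j + 1 + 1).factorial := by
            have hfac2 : (((j + 1 + 1).factorial : ℕ) : ℝ) =
                ((j:ℝ) + 2) * ((j + 1).factorial : ℝ) := by
              rw [Nat.factorial_succ]; push_cast; ring
            have h1 : ((j:ℝ) + 2) ≠ 0 := by positivity
            have h2 : (((j + 1).factorial : ℕ) : ℝ) ≠ 0 := by positivity
            rw [pow_succ, hfac2]
            field_simp
            ring
  refine ⟨hsum, fun n k hn hk hkn => ⟨main k hk n hkn, ?_⟩⟩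
  gcongr
end

section
/- For every real α with 1 < α < 2, all the numbers B_{n,k} with n ≥ 1 and 1 ≤ k ≤ n are nonnegative, and consequently c_p^{(α)} > 0 for every integer p ≥ 0. -/
open scoped Real BigOperators
open MeasureTheory Filter Asymptotics

/-- The coefficients `c_p^{(α)}`. -/
noncomputable def cC (α : ℝ) : ℕ → ℝ
  | 0 => 1
  | p + 1 =>
      (1 / ((2 * (p + 1)).factorial * Real.sqrt Real.pi)) * (2 / α) ^ (p + 1) *
        ∑ k ∈ Finset.Icc 1 (2 * (p + 1)),
          Bc α (2 * (p + 1)) k * Real.Gamma ((p + 1 : ℝ) + k + 1 / 2) *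
            (2 * (α - 1)) ^ k

lemma B1_pos (α : ℝ) (hα₂ : α < 2) (n : ℕ) : 0 < B1 α n := by
  apply div_pos
  · exact ascPochhammer_pos _ _ (by linarith)
  · positivity

lemma Bc_nonneg (α : ℝ) (hα₂ : α < 2) : ∀ k n : ℕ, 0 ≤ Bc α n k := by
  intro k
  induction k with
  | zero => intro n; simp [Bc]
  | succ k ih =>
    intro n
    match k with
    | 0 => exact (B1_pos α hα₂ n).le
    | k + 1 =>
      show 0 ≤ (1 / (k + 2 : ℝ)) * ∑ l ∈ Finset.Icc (k + 1) (n - 1),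
          (n.choose l : ℝ) * B1 α (n - l) * Bc α l (k + 1)
      apply mul_nonneg (by positivity)
      apply Finset.sum_nonneg
      intro l _
      exact mul_nonneg (mul_nonneg (by positivity) (B1_pos α hα₂ _).le) (ih l)

/-- For `1 < α < 2`, all the `B_{n,k}` with `1 ≤ k ≤ n` are nonnegative, and
consequently `c_p^{(α)} > 0` for every `p ≥ 0`. -/
theorem Bck_nonneg_and_cC_pos (α : ℝ) (hα₁ : 1 < α) (hα₂ : α < 2) :
    (∀ n k : ℕ, 1 ≤ n → 1 ≤ k → k ≤ n → 0 ≤ Bc α n k) ∧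
    ∀ p : ℕ, 0 < cC α p := by
  constructor
  · exact fun n k _ _ _ => Bc_nonneg α hα₂ k n
  · intro p
    match p with
    | 0 => norm_num [cC]
    | p + 1 =>
      have hα : (0 : ℝ) < α := by linarith
      show 0 < (1 / ((2 * (p + 1)).factorial * Real.sqrt Real.pi)) * (2 / α) ^ (p + 1) *
        ∑ k ∈ Finset.Icc 1 (2 * (p + 1)),
          Bc α (2 * (p + 1)) k * Real.Gamma ((p + 1 : ℝ) + k + 1 / 2) *
            (2 * (α - 1)) ^ k
      have hfac : (0 : ℝ) < ((2 * (p + 1)).factorial : ℝ) := by positivity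
      have hpi : (0 : ℝ) < Real.sqrt Real.pi := Real.sqrt_pos.mpr Real.pi_pos
      apply mul_pos (mul_pos (by positivity) (by positivity))
      apply Finset.sum_pos'
      · intro k _
        have hG : 0 < Real.Gamma ((p + 1 : ℝ) + k + 1 / 2) := by
          apply Real.Gamma_pos_of_pos; positivity
        have h2 : (0:ℝ) ≤ 2 * (α - 1) := by linarith
        exact mul_nonneg (mul_nonneg (Bc_nonneg α hα₂ k _) hG.le) (pow_nonneg h2 k)
      · refine ⟨1, Finset.mem_Icc.mpr ⟨le_refl 1, by omega⟩, ?_⟩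
        have h1 : Bc α (2 * (p + 1)) 1 = B1 α (2 * (p + 1)) := rfl
        have hG : 0 < Real.Gamma ((p + 1 : ℝ) + 1 + 1 / 2) := by
          apply Real.Gamma_pos_of_pos; positivity
        rw [h1]
        have := B1_pos α hα₂ (2 * (p + 1))
        have h2 : (0:ℝ) < 2 * (α - 1) := by linarith
        positivity
end

section
/- Take α = 2 in the definitions of B_{n,k} and c_p^{(α)} (so that B_{n,1} = 0 for every n ≥ 2 while B_{1,1} = 1/6). Then for every integer n ≥ 1: c_n^{(2)} = (1/((2n)! √π)) · (1/3)^{2n} · Γ(3n + 1/2). -/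
open scoped Real BigOperators
open MeasureTheory Filter Asymptotics

lemma B1_two_one : B1 2 1 = 6⁻¹ := by
  simp [B1]; norm_num

lemma B1_two_of_two_le {m : ℕ} (hm : 2 ≤ m) : B1 2 m = 0 := by
  have h : m - 1 ≠ 0 := by omega
  simp [B1, show (2:ℝ) - 2 = 0 by ring, ascPochhammer_eval_zero, h]

lemma Bc_two (k : ℕ) : ∀ n : ℕ, 1 ≤ n → 1 ≤ k →
    Bc 2 n k = if n = k then (6:ℝ)⁻¹ ^ n else 0 := by
  induction k using Nat.strong_induction_on with
  | _ k ih =>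
    intro n hn hk
    match k, hk with
    | 1, _ =>
      rcases eq_or_lt_of_le hn with h | h
      · simp [Bc, ← h, B1_two_one]
      · rw [show Bc 2 n 1 = B1 2 n from rfl, B1_two_of_two_le h, if_neg (by omega)]
    | (k+2), _ =>
      rw [show Bc 2 n (k+2) = (1 / (k + 2 : ℝ)) *
        ∑ l ∈ Finset.Icc (k + 1) (n - 1),
          (n.choose l : ℝ) * B1 2 (n - l) * Bc 2 l (k + 1) from rfl]
      by_cases hnk : n = k + 2
      · subst hnk
        rw [show k + 2 - 1 = k + 1 by omega, Finset.Icc_self, Finset.sum_singleton,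
          ih (k+1) (by omega) (k+1) (by omega) (by omega), if_pos rfl,
          show k + 2 - (k+1) = 1 by omega, B1_two_one, if_pos rfl]
        have : ((k+2).choose (k+1) : ℝ) = (k+2 : ℝ) := by
          rw [Nat.choose_symm_of_eq_add (show k+2 = (k+1)+1 by omega),
            Nat.choose_one_right]; push_cast; ring
        rw [this]
        field_simp
        ring
      · rw [if_neg hnk, Finset.sum_eq_zero, mul_zero]
        intro l hl
        simp only [Finset.mem_Icc] at hl
        rw [ih (k+1) (by omega) l (by omega) (by omega)]
        by_cases hlk : l = k + 1
        · rw [if_pos hlk, B1_two_of_two_le (by omega), mul_zero, zero_mul]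
        · rw [if_neg hlk, mul_zero]

theorem cC_two_aux (p : ℕ) :
    ∑ k ∈ Finset.Icc 1 (2 * (p + 1)),
          Bc 2 (2 * (p + 1)) k * Real.Gamma ((p + 1 : ℝ) + k + 1 / 2) *
            (2 * ((2:ℝ) - 1)) ^ k
    = (6:ℝ)⁻¹ ^ (2*(p+1)) * Real.Gamma ((p+1:ℝ) + (2*(p+1)) + 1/2) * 2 ^ (2*(p+1)) := by
  rw [Finset.sum_eq_single (2*(p+1))]
  · rw [Bc_two _ _ (by omega) (by omega), if_pos rfl]; norm_num
  · intro b hb hne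
    simp only [Finset.mem_Icc] at hb
    rw [Bc_two _ _ (by omega) (by omega), if_neg (by omega), zero_mul, zero_mul]
  · intro h; exact absurd (Finset.mem_Icc.mpr ⟨by omega, le_refl _⟩) h

/-- With `α = 2` in the definitions of `B_{n,k}` and `c_p^{(α)}`, for every
`n ≥ 1`: `c_n^{(2)} = (1/((2n)! √π)) (1/3)^{2n} Γ(3n + 1/2)`. -/
theorem cC_two (n : ℕ) (hn : 1 ≤ n) :
    cC 2 n =
      (1 / ((2 * n).factorial * Real.sqrt Real.pi)) * (1 / 3 : ℝ) ^ (2 * n) *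
        Real.Gamma (3 * (n : ℝ) + 1 / 2) := by
  obtain ⟨p, rfl⟩ : ∃ p, n = p + 1 := ⟨n - 1, by omega⟩
  rw [show cC 2 (p+1) = (1 / ((2 * (p + 1)).factorial * Real.sqrt Real.pi)) * (2 / 2) ^ (p + 1) *
        ∑ k ∈ Finset.Icc 1 (2 * (p + 1)),
          Bc 2 (2 * (p + 1)) k * Real.Gamma ((p + 1 : ℝ) + k + 1 / 2) *
            (2 * ((2:ℝ) - 1)) ^ k from rfl, cC_two_aux]
  rw [show ((p:ℝ) + 1 + 2*((p:ℝ)+1) + 1/2) = 3*(((p+1:ℕ)):ℝ)+1/2 by push_cast; ring]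
  have h2 : (6:ℝ)⁻¹ ^ (2*(p+1)) * 2 ^ (2*(p+1)) = (1/3:ℝ) ^ (2*(p+1)) := by
    rw [← mul_pow]; norm_num
  rw [show (2:ℝ)/2 = 1 by norm_num, one_pow, mul_one]
  rw [mul_comm ((6:ℝ)⁻¹ ^ (2*(p+1))) _, mul_assoc, h2]
  ring
end

section
/- The function Ψ_2 satisfies the inhomogeneous Airy differential equation: for every real λ, Ψ_2″(λ) = λ · Ψ_2(λ) − 1/π. -/
open scoped Real BigOperators
open MeasureTheory Filter Asymptotics

/-- The companion function `Ψ_α` (with cosine in place of sine). -/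
noncomputable def Psi (α : ℝ) (x : ℝ) : ℝ :=
  (1 / Real.pi) * ∑' n : ℕ,
    ((-1 : ℝ) ^ n / n.factorial) * Real.Gamma ((1 + n) / (1 + α)) *
      Real.cos (Real.pi * (1 + n) / (α + 1)) *
      (1 + α) ^ (((n : ℝ) - α) / (1 + α)) * x ^ n

noncomputable def cc (n : ℕ) : ℝ :=
  ((-1 : ℝ) ^ n / n.factorial) * Real.Gamma ((1 + n) / 3) *
    Real.cos (Real.pi * (1 + n) / 3) * (3 : ℝ) ^ (((n : ℝ) - 2) / 3)

noncomputable def SS (x : ℝ) : ℝ := ∑' n : ℕ, cc n * x ^ n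
noncomputable def SS1 (x : ℝ) : ℝ := ∑' n : ℕ, cc n * ((n : ℝ) * x ^ (n - 1))
noncomputable def SS2 (x : ℝ) : ℝ :=
  ∑' n : ℕ, cc n * ((n : ℝ) * (((n - 1 : ℕ) : ℝ) * x ^ (n - 1 - 1)))
lemma cos_ge_aux (m : ℕ) : 1/2 ≤ |Real.cos (Real.pi * m / 3)| := by
  have h2 : (m : ℝ) = (m % 6 : ℕ) + 6 * (m / 6 : ℕ) := by
    conv_lhs => rw [← Nat.mod_add_div m 6]
    push_cast; ring
  have h3 : Real.pi * m / 3 = Real.pi * (m % 6 : ℕ) / 3 + ((m / 6 : ℕ) : ℤ) * (2 * Real.pi) := by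
    rw [show (((m / 6 : ℕ) : ℤ) : ℝ) = ((m / 6 : ℕ) : ℝ) by rw [Int.cast_natCast], h2]; ring
  rw [h3, Real.cos_add_int_mul_two_pi]
  have hr : m % 6 < 6 := Nat.mod_lt _ (by norm_num)
  interval_cases h : m % 6 <;> push_cast
  · rw [show Real.pi * 0 / 3 = 0 by ring, Real.cos_zero]; norm_num
  · rw [show Real.pi * 1 / 3 = Real.pi / 3 by ring, Real.cos_pi_div_three,
      abs_of_nonneg (by norm_num)]
  · rw [show Real.pi * 2 / 3 = Real.pi - Real.pi / 3 by ring, Real.cos_pi_sub,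
      Real.cos_pi_div_three, abs_neg, abs_of_nonneg (by norm_num)]
  · rw [show Real.pi * 3 / 3 = Real.pi by ring, Real.cos_pi]; norm_num
  · rw [show Real.pi * 4 / 3 = Real.pi / 3 + Real.pi by ring, Real.cos_add_pi,
      Real.cos_pi_div_three, abs_neg, abs_of_nonneg (by norm_num)]
  · rw [show Real.pi * 5 / 3 = 2 * Real.pi - Real.pi / 3 by ring, Real.cos_two_pi_sub,
      Real.cos_pi_div_three, abs_of_nonneg (by norm_num)]

lemma cos_ge (n : ℕ) : 1/2 ≤ |Real.cos (Real.pi * (1 + n) / 3)| := by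
  have := cos_ge_aux (n + 1)
  rw [show (((n:ℕ) + 1 : ℕ) : ℝ) = 1 + (n:ℝ) by push_cast; ring] at this
  exact this

lemma cc_ne (n : ℕ) : cc n ≠ 0 := by
  have h1 : ((-1 : ℝ) ^ n / n.factorial) ≠ 0 := by positivity
  have h2 : Real.Gamma ((1 + n) / 3) ≠ 0 :=
    (Real.Gamma_pos_of_pos (by positivity)).ne'
  have h3 : Real.cos (Real.pi * (1 + n) / 3) ≠ 0 := by
    intro h; have := cos_ge n; rw [h] at this; simp at this; linarith
  have h4 : (3 : ℝ) ^ (((n : ℝ) - 2) / 3) ≠ 0 := by positivity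
  exact mul_ne_zero (mul_ne_zero (mul_ne_zero h1 h2) h3) h4

lemma cc_rec (n : ℕ) : cc (n + 3) * ((n + 3) * (n + 2)) = cc n := by
  have hfac : ((n + 3).factorial : ℝ) = (n+3) * ((n+2) * ((n+1) * n.factorial)) := by
    rw [Nat.factorial_succ, Nat.factorial_succ, Nat.factorial_succ]; push_cast; ring
  have hG : Real.Gamma ((1 + ((n:ℝ)+3)) / 3) = ((1 + n) / 3) * Real.Gamma ((1 + n) / 3) := by
    rw [show ((1 + ((n:ℝ)+3)) / 3) = (1 + n)/3 + 1 by ring, Real.Gamma_add_one (by positivity)]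
  have hcos : Real.cos (Real.pi * (1 + ((n:ℝ)+3)) / 3) = -Real.cos (Real.pi * (1 + n) / 3) := by
    rw [show Real.pi * (1 + ((n:ℝ)+3)) / 3 = Real.pi * (1 + n) / 3 + Real.pi by ring,
      Real.cos_add_pi]
  have hrp : (3 : ℝ) ^ ((((n:ℝ)+3) - 2) / 3) = 3 * (3 : ℝ) ^ (((n : ℝ) - 2) / 3) := by
    rw [show ((((n:ℝ)+3) - 2) / 3) = ((n : ℝ) - 2) / 3 + 1 by ring,
      Real.rpow_add (by norm_num), Real.rpow_one]; ring
  have hpow : ((-1 : ℝ)) ^ (n + 3) = -(-1 : ℝ)^n := by rw [pow_add]; ring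
  unfold cc
  push_cast
  rw [hfac, hG, hcos, hrp, hpow]
  have hf : (n.factorial : ℝ) ≠ 0 := by positivity
  field_simp
  ring

lemma cc_two : cc 2 * 2 = -1 := by
  unfold cc
  norm_num



lemma gamma_bound (n : ℕ) :
    Real.Gamma ((2 + n) / 3) ≤ Real.Gamma ((1 + n) / 3) * ((1 + (n:ℝ)) / 3) ^ ((1:ℝ)/3) := by
  have hs : (0:ℝ) < (1 + n) / 3 := by positivity
  have ht : (0:ℝ) < (4 + n) / 3 := by positivity
  have key := Real.Gamma_mul_add_mul_le_rpow_Gamma_mul_rpow_Gamma hs ht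
    (by norm_num : (0:ℝ) < 2/3) (by norm_num : (0:ℝ) < 1/3) (by norm_num : (2:ℝ)/3 + 1/3 = 1)
  have harg : (2:ℝ)/3 * ((1 + n) / 3) + 1/3 * ((4 + n) / 3) = (2 + n) / 3 := by ring
  rw [harg] at key
  have hG4 : Real.Gamma ((4 + (n:ℝ)) / 3) = ((1 + n)/3) * Real.Gamma ((1 + n) / 3) := by
    rw [show ((4 + (n:ℝ)) / 3) = (1 + n)/3 + 1 by ring, Real.Gamma_add_one hs.ne']
  rw [hG4] at key
  have hGpos : 0 < Real.Gamma ((1 + (n:ℝ)) / 3) := Real.Gamma_pos_of_pos hs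
  calc Real.Gamma ((2 + n) / 3)
      ≤ Real.Gamma ((1 + n)/3) ^ ((2:ℝ)/3) *
        (((1 + n)/3) * Real.Gamma ((1 + n) / 3)) ^ ((1:ℝ)/3) := key
    _ = Real.Gamma ((1 + n) / 3) * ((1 + (n:ℝ)) / 3) ^ ((1:ℝ)/3) := by
        rw [Real.mul_rpow (by positivity) hGpos.le,
          ← mul_assoc, mul_comm (Real.Gamma _ ^ ((2:ℝ)/3)), mul_assoc,
          ← Real.rpow_add hGpos, show (2:ℝ)/3+1/3 = 1 by norm_num, Real.rpow_one]
        ring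

lemma cc_ratio (n : ℕ) :
    |cc (n + 1)| ≤ 2 * ((n:ℝ)+1) ^ (-(2:ℝ)/3) * |cc n| := by
  have hGpos : 0 < Real.Gamma ((1 + (n:ℝ)) / 3) := Real.Gamma_pos_of_pos (by positivity)
  have habs : |cc (n+1)| = (1 / (n+1).factorial) * Real.Gamma ((2 + n) / 3) *
      |Real.cos (Real.pi * (2 + n) / 3)| * (3 : ℝ) ^ (((n:ℝ) - 1) / 3) := by
    unfold cc
    rw [abs_mul, abs_mul, abs_mul, abs_div, abs_pow, abs_neg, abs_one, one_pow]
    push_cast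
    rw [show (1 + ((n:ℝ)+1)) = 2 + n by ring, show (((n:ℝ)+1) - 2)/3 = ((n:ℝ)-1)/3 by ring,
      Nat.abs_cast, abs_of_pos (Real.Gamma_pos_of_pos (by positivity)),
      abs_of_pos (Real.rpow_pos_of_pos (by norm_num) _)]
  have habs2 : |cc n| = (1 / n.factorial) * Real.Gamma ((1 + n) / 3) *
      |Real.cos (Real.pi * (1 + n) / 3)| * (3 : ℝ) ^ (((n:ℝ) - 2) / 3) := by
    unfold cc
    rw [abs_mul, abs_mul, abs_mul, abs_div, abs_pow, abs_neg, abs_one, one_pow,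
      Nat.abs_cast, abs_of_pos hGpos, abs_of_pos (Real.rpow_pos_of_pos (by norm_num) _)]
  rw [habs, habs2]
  have h3 : (3:ℝ) ^ (((n:ℝ) - 1) / 3) = (3:ℝ) ^ (((n:ℝ) - 2) / 3) * 3 ^ ((1:ℝ)/3) := by
    rw [← Real.rpow_add (by norm_num)]; ring_nf
  have hfac : ((n+1).factorial : ℝ) = (n+1) * n.factorial := by
    rw [Nat.factorial_succ]; push_cast; ring
  have hcos1 : |Real.cos (Real.pi * (2 + n) / 3)| ≤ 1 := Real.abs_cos_le_one _
  have hkey : ((1 + (n:ℝ)) / 3) ^ ((1:ℝ)/3) * 3 ^ ((1:ℝ)/3) / ((n:ℝ)+1)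
      = ((n:ℝ)+1) ^ (-(2:ℝ)/3) := by
    rw [← Real.mul_rpow (by positivity) (by norm_num),
      div_mul_cancel₀ _ (by norm_num : (3:ℝ) ≠ 0)]
    rw [show ((n:ℝ)+1) ^ (-(2:ℝ)/3) = ((n:ℝ)+1) ^ ((1:ℝ)/3 + (-1 : ℝ)) by norm_num,
      Real.rpow_add (by positivity), Real.rpow_neg_one, add_comm (1:ℝ) (n:ℝ)]
    ring
  have hcos2 := cos_ge n
  calc (1 / ((n+1).factorial:ℝ)) * Real.Gamma ((2 + n) / 3) *
      |Real.cos (Real.pi * (2 + n) / 3)| * (3 : ℝ) ^ (((n:ℝ) - 1) / 3)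
      ≤ (1 / ((n+1).factorial:ℝ)) *
        (Real.Gamma ((1 + n)/3) * ((1 + (n:ℝ)) / 3) ^ ((1:ℝ)/3)) * 1 *
        (3 : ℝ) ^ (((n:ℝ) - 1) / 3) := by
        gcongr
        all_goals first | positivity | exact gamma_bound n | exact hcos1
    _ = (((1 + (n:ℝ)) / 3) ^ ((1:ℝ)/3) * 3 ^ ((1:ℝ)/3) / ((n:ℝ)+1)) *
        ((1 / n.factorial) * Real.Gamma ((1 + n) / 3) * (3 : ℝ) ^ (((n:ℝ) - 2) / 3)) := by
        rw [h3, hfac]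
        have : ((n:ℝ)+1) ≠ 0 := by positivity
        have : (n.factorial : ℝ) ≠ 0 := by positivity
        field_simp
    _ = ((n:ℝ)+1) ^ (-(2:ℝ)/3) *
        ((1 / n.factorial) * Real.Gamma ((1 + n) / 3) * (3 : ℝ) ^ (((n:ℝ) - 2) / 3)) := by
        rw [hkey]
    _ ≤ ((n:ℝ)+1) ^ (-(2:ℝ)/3) *
        ((2 * |Real.cos (Real.pi * (1 + n) / 3)|) *
          ((1 / n.factorial) * Real.Gamma ((1 + n) / 3) * (3 : ℝ) ^ (((n:ℝ) - 2) / 3))) := by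
        have h1 : (1:ℝ) ≤ 2 * |Real.cos (Real.pi * (1 + n) / 3)| := by linarith
        exact mul_le_mul_of_nonneg_left
          (le_mul_of_one_le_left (by positivity) h1) (by positivity)
    _ = 2 * ((n:ℝ)+1) ^ (-(2:ℝ)/3) *
        ((1 / n.factorial) * Real.Gamma ((1 + n) / 3) *
          |Real.cos (Real.pi * (1 + n) / 3)| * (3 : ℝ) ^ (((n:ℝ) - 2) / 3)) := by ring

lemma summable_master {R : ℝ} (hR : 0 < R) : Summable (fun n => |cc n| * R ^ n) := by
  refine summable_of_ratio_test_tendsto_lt_one one_pos (Eventually.of_forall fun n =>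
    mul_ne_zero (abs_ne_zero.mpr (cc_ne n)) (pow_ne_zero _ hR.ne')) ?_
  have hb : ∀ n : ℕ, ‖|cc (n+1)| * R ^ (n+1)‖ / ‖|cc n| * R ^ n‖ ≤
      2 * ((n:ℝ)+1) ^ (-(2:ℝ)/3) * R := by
    intro n
    have hpos : 0 < |cc n| * R ^ n :=
      mul_pos (abs_pos.mpr (cc_ne n)) (pow_pos hR n)
    rw [Real.norm_eq_abs, Real.norm_eq_abs, abs_of_pos hpos,
      abs_of_pos (mul_pos (abs_pos.mpr (cc_ne (n+1))) (pow_pos hR (n+1))),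
      div_le_iff₀ hpos]
    calc |cc (n+1)| * R ^ (n+1) = (|cc (n+1)|) * (R ^ n * R) := by rw [pow_succ]
      _ ≤ (2 * ((n:ℝ)+1) ^ (-(2:ℝ)/3) * |cc n|) * (R ^ n * R) := by
          gcongr; exact cc_ratio n
      _ = 2 * ((n:ℝ)+1) ^ (-(2:ℝ)/3) * R * (|cc n| * R ^ n) := by ring
  have hg : Tendsto (fun n : ℕ => 2 * ((n:ℝ)+1) ^ (-(2:ℝ)/3) * R) atTop (nhds 0) := by
    have h1 : Tendsto (fun n : ℕ => ((n:ℝ)+1)) atTop atTop :=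
      tendsto_atTop_add_const_right _ 1 tendsto_natCast_atTop_atTop
    have h2 : Tendsto (fun x : ℝ => x ^ (-(2:ℝ)/3)) atTop (nhds 0) := by
      rw [show -(2:ℝ)/3 = -(2/3) by norm_num]
      exact tendsto_rpow_neg_atTop (by norm_num)
    have := ((h2.comp h1).const_mul (2:ℝ)).mul_const R
    simpa using this
  exact squeeze_zero' (Eventually.of_forall fun n => by positivity)
    (Eventually.of_forall hb) hg



lemma nat_le_two_pow (n : ℕ) : (n : ℝ) ≤ 2 ^ n := by
  calc (n : ℝ) ≤ ((2 ^ n : ℕ) : ℝ) := by exact_mod_cast (Nat.lt_two_pow_self (n := n)).le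
    _ = 2 ^ n := by push_cast; ring

lemma pow_bound {x R : ℝ} (hR : 1 ≤ R) (hx : |x| ≤ R) (k n : ℕ) (hk : k ≤ n) :
    |x| ^ k ≤ R ^ n := by
  calc |x| ^ k ≤ R ^ k := pow_le_pow_left₀ (abs_nonneg x) hx k
    _ ≤ R ^ n := pow_le_pow_right₀ hR hk

lemma bound1 {x R : ℝ} (hR : 1 ≤ R) (hx : |x| ≤ R) (n : ℕ) :
    ‖cc n * ((n : ℝ) * x ^ (n - 1))‖ ≤ |cc n| * (2 * R) ^ n := by
  rw [Real.norm_eq_abs, abs_mul, abs_mul, abs_pow, Nat.abs_cast, mul_pow]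
  refine mul_le_mul_of_nonneg_left ?_ (abs_nonneg _)
  exact mul_le_mul (nat_le_two_pow n) (pow_bound hR hx _ _ (Nat.sub_le n 1))
    (pow_nonneg (abs_nonneg x) _) (by positivity)

lemma bound2 {x R : ℝ} (hR : 1 ≤ R) (hx : |x| ≤ R) (n : ℕ) :
    ‖cc n * ((n : ℝ) * (((n - 1 : ℕ) : ℝ) * x ^ (n - 1 - 1)))‖ ≤ |cc n| * (4 * R) ^ n := by
  rw [Real.norm_eq_abs, abs_mul, abs_mul, abs_mul, abs_pow, Nat.abs_cast, Nat.abs_cast]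
  have h4 : (4 : ℝ) * R = 2 * (2 * R) := by ring
  rw [h4, mul_pow, mul_pow]
  
  refine mul_le_mul_of_nonneg_left ?_ (abs_nonneg _)
  have h1 : ((n - 1 : ℕ) : ℝ) ≤ 2 ^ n := by
    calc ((n - 1 : ℕ) : ℝ) ≤ (n : ℝ) := by exact_mod_cast Nat.sub_le n 1
    _ ≤ 2 ^ n := nat_le_two_pow n
  calc (n : ℝ) * (((n - 1 : ℕ) : ℝ) * |x| ^ (n - 1 - 1))
      ≤ 2 ^ n * (2 ^ n * R ^ n) := by
        refine mul_le_mul (nat_le_two_pow n) ?_ (by positivity) (by positivity)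
        exact mul_le_mul h1 (pow_bound hR hx _ _ ((Nat.sub_le _ 1).trans (Nat.sub_le n 1)))
          (pow_nonneg (abs_nonneg x) _) (by positivity)

lemma summable_SS (x : ℝ) : Summable (fun n : ℕ => cc n * x ^ n) := by
  refine Summable.of_norm_bounded (summable_master
    (show (0:ℝ) < |x| + 1 by positivity)) fun n => ?_
  rw [Real.norm_eq_abs, abs_mul, abs_pow]
  exact mul_le_mul_of_nonneg_left
    (pow_le_pow_left₀ (abs_nonneg x) (by linarith [abs_nonneg x]) n) (abs_nonneg _)

lemma hasDeriv_SS (y : ℝ) : HasDerivAt SS (SS1 y) y := by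
  set R := |y| + 1 with hRdef
  have hR1 : 1 ≤ R := by rw [hRdef]; linarith [abs_nonneg y]
  have hyR : |y| < R := by simp [hRdef]
  have hmem : y ∈ Metric.ball (0:ℝ) R := by
    simpa [Real.dist_eq] using hyR
  exact hasDerivAt_tsum_of_isPreconnected
    (summable_master (show (0:ℝ) < 2 * R by positivity))
    Metric.isOpen_ball (convex_ball (0:ℝ) R).isPreconnected
    (fun n x _ => (hasDerivAt_pow n x).const_mul (cc n))
    (fun n x hx => bound1 hR1 (by simpa [Real.dist_eq] using (Metric.mem_ball.mp hx).le) n)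
    hmem (summable_SS y) hmem

lemma hasDeriv_SS1 (y : ℝ) : HasDerivAt SS1 (SS2 y) y := by
  set R := |y| + 1 with hRdef
  have hR1 : 1 ≤ R := by rw [hRdef]; linarith [abs_nonneg y]
  have hyR : |y| < R := by simp [hRdef]
  have hmem : y ∈ Metric.ball (0:ℝ) R := by
    simpa [Real.dist_eq] using hyR
  refine hasDerivAt_tsum_of_isPreconnected
    (summable_master (show (0:ℝ) < 4 * R by positivity))
    Metric.isOpen_ball (convex_ball (0:ℝ) R).isPreconnected
    (fun n x _ => ((hasDerivAt_pow (n-1) x).const_mul ((n:ℝ))).const_mul (cc n))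
    (fun n x hx => bound2 hR1 (by simpa [Real.dist_eq] using (Metric.mem_ball.mp hx).le) n)
    hmem ?_ hmem
  refine Summable.of_norm_bounded (summable_master
    (show (0:ℝ) < 2 * R by positivity)) fun n => bound1 hR1 hyR.le n

lemma SS2_eq (l : ℝ) : SS2 l = l * SS l - 1 := by
  have hs2 : Summable (fun n : ℕ => cc n * ((n : ℝ) * (((n - 1 : ℕ) : ℝ) * l ^ (n - 1 - 1)))) := by
    refine Summable.of_norm_bounded (summable_master
      (show (0:ℝ) < 4 * (|l| + 1) by positivity)) fun n =>
      bound2 (by linarith [abs_nonneg l]) (by linarith [abs_nonneg l]) n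
  set f : ℕ → ℝ := fun n => cc n * ((n : ℝ) * (((n - 1 : ℕ) : ℝ) * l ^ (n - 1 - 1))) with hf
  have hf0 : f 0 = 0 := by simp [hf]
  have hf1 : f 1 = 0 := by simp [hf]
  have hf2 : f 2 = cc 2 * 2 := by norm_num [hf]
  have hf3 : ∀ n : ℕ, f (n + 3) = cc n * l ^ (n + 1) := by
    intro n
    show cc (n+3) * (((n+3 : ℕ) : ℝ) * (((n+2 : ℕ) : ℝ) * l ^ (n+1))) = cc n * l ^ (n+1)
    have h := cc_rec n
    push_cast
    push_cast at h
    linear_combination l ^ (n+1) * h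
  have key : SS2 l = f 0 + (f 1 + (f 2 + ∑' n : ℕ, f (n + 1 + 1 + 1))) := by
    rw [show SS2 l = ∑' n : ℕ, f n from rfl, hs2.tsum_eq_zero_add,
      ((summable_nat_add_iff 1).mpr hs2).tsum_eq_zero_add,
      ((summable_nat_add_iff 1).mpr ((summable_nat_add_iff 1).mpr hs2)).tsum_eq_zero_add]
  have h2 : ∑' n : ℕ, f (n + 1 + 1 + 1) = ∑' n : ℕ, cc n * l ^ (n + 1) :=
    tsum_congr fun n => hf3 n
  have h3 : l * SS l = ∑' n : ℕ, cc n * l ^ (n+1) := by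
    rw [SS, ← tsum_mul_left]
    exact tsum_congr fun n => by ring
  rw [key, hf0, hf1, hf2, cc_two, h2, ← h3]
  ring

lemma Psi_two_eq : Psi 2 = fun x => (1 / Real.pi) * SS x := by
  funext x
  unfold Psi SS cc
  norm_num

/-- `Ψ₂` satisfies the inhomogeneous Airy equation:
`Ψ₂''(λ) = λ Ψ₂(λ) − 1/π` for all `λ`. -/
theorem psi_two_airy (l : ℝ) : deriv (deriv (Psi 2)) l = l * Psi 2 l - 1 / Real.pi := by
  have hd1 : deriv (Psi 2) = fun x => (1 / Real.pi) * SS1 x := by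
    funext x
    rw [Psi_two_eq]
    exact ((hasDeriv_SS x).const_mul (1 / Real.pi)).deriv
  rw [hd1, ((hasDeriv_SS1 l).const_mul (1 / Real.pi)).deriv, Psi_two_eq, SS2_eq]
  ring
end

section
/- For every real λ, the Wronskian-type combination satisfies Ψ_2′(λ) Φ_2(λ) − Φ_2′(λ) Ψ_2(λ) = 1/(3π) − (1/π) ∫_0^λ Φ_2(x) dx. -/
open scoped Real BigOperators
open MeasureTheory Filter Asymptotics

/-- The M-Wright function `Φ_α` as a real power series. -/
noncomputable def Phi (α : ℝ) (x : ℝ) : ℝ :=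
  (1 / Real.pi) * ∑' n : ℕ,
    ((-1 : ℝ) ^ n / n.factorial) * Real.Gamma ((1 + n) / (1 + α)) *
      Real.sin (Real.pi * (1 + n) / (α + 1)) *
      (1 + α) ^ (((n : ℝ) - α) / (1 + α)) * x ^ n

namespace WronAux

noncomputable def F (t : ℕ → ℝ) (x : ℝ) : ℝ := ∑' n : ℕ, t n * x ^ n

noncomputable def dcoef (t : ℕ → ℝ) (n : ℕ) : ℝ := ((n : ℝ) + 1) * t (n + 1)

def Good (K : ℝ) (t : ℕ → ℝ) : Prop :=
  ∀ n : ℕ, ∃ a : ℝ, t (n + 3) = t n * a ∧ |a| * ((n : ℝ) + 1) ^ 2 ≤ K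

theorem Good.der {K : ℝ} {t : ℕ → ℝ} (h : Good K t) (hK : 0 ≤ K) :
    Good (2 * K) (dcoef t) := by
  intro n
  obtain ⟨a, ha, hb⟩ := h (n + 1)
  push_cast at hb
  refine ⟨((n : ℝ) + 4) / ((n : ℝ) + 1) * a, ?_, ?_⟩
  · unfold dcoef
    have h4 : (n : ℕ) + 3 + 1 = (n + 1) + 3 := by omega
    rw [h4, ha]
    have h2 : ((n : ℝ) + 1) ≠ 0 := by positivity
    field_simp
    push_cast
    ring
  · have e : |((n : ℝ) + 4) / ((n : ℝ) + 1) * a| * ((n : ℝ) + 1) ^ 2 =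
        ((n : ℝ) + 4) * (((n : ℝ) + 1) * |a|) := by
      rw [abs_mul, abs_div, abs_of_nonneg (show (0:ℝ) ≤ (n : ℝ) + 4 by positivity),
        abs_of_nonneg (show (0:ℝ) ≤ (n : ℝ) + 1 by positivity)]
      have h2 : ((n : ℝ) + 1) ≠ 0 := by positivity
      field_simp
    rw [e]
    nlinarith [abs_nonneg a, Nat.cast_nonneg (α := ℝ) n]

theorem Good.abs_succ {K : ℝ} {t : ℕ → ℝ} (h : Good K t) :
    ∀ n : ℕ, |t (n + 3)| * ((n : ℝ) + 1) ≤ K * |t n| := by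
  intro n
  obtain ⟨a, ha, hb⟩ := h n
  rw [ha, abs_mul]
  have h1 : ((n : ℝ) + 1) ≤ ((n : ℝ) + 1) ^ 2 := by nlinarith [Nat.cast_nonneg (α := ℝ) n]
  have h0 := abs_nonneg (t n)
  have h2 : |t n| * (|a| * ((n : ℝ) + 1) ^ 2) ≤ |t n| * K := mul_le_mul_of_nonneg_left hb h0
  have h3 := abs_nonneg a
  nlinarith [h2, mul_le_mul_of_nonneg_left h1 (mul_nonneg h0 h3)]

theorem Good.summable_abs {K : ℝ} {t : ℕ → ℝ} (h : Good K t) (R : ℝ) (hR : 0 ≤ R) :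
    Summable (fun n : ℕ => |t n| * R ^ n) := by
  have hu0 : ∀ n : ℕ, 0 ≤ |t n| * R ^ n := fun n => by positivity
  -- step estimate
  have hstep : ∀ n : ℕ, (|t (n + 3)| * R ^ (n + 3)) * ((n : ℝ) + 1) ≤
      (K * R ^ 3) * (|t n| * R ^ n) := by
    intro n
    have e : (|t (n + 3)| * R ^ (n + 3)) * ((n : ℝ) + 1) =
        (|t (n + 3)| * ((n : ℝ) + 1)) * (R ^ n * R ^ 3) := by
      rw [pow_add]; ring
    rw [e]
    calc (|t (n + 3)| * ((n : ℝ) + 1)) * (R ^ n * R ^ 3)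
        ≤ (K * |t n|) * (R ^ n * R ^ 3) :=
          mul_le_mul_of_nonneg_right (h.abs_succ n) (by positivity)
      _ = (K * R ^ 3) * (|t n| * R ^ n) := by ring
  obtain ⟨N, hN⟩ := exists_nat_ge (K * R ^ 3 * 2)
  have hhalf : ∀ n : ℕ, N ≤ n →
      |t (n + 3)| * R ^ (n + 3) ≤ (|t n| * R ^ n) / 2 := by
    intro n hn
    have hn1 : (0 : ℝ) < (n : ℝ) + 1 := by positivity
    have hn' : (N : ℝ) ≤ (n : ℝ) := by exact_mod_cast hn
    have h2 : (|t (n + 3)| * R ^ (n + 3)) * ((n : ℝ) + 1) ≤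
        ((|t n| * R ^ n) / 2) * ((n : ℝ) + 1) := by
      nlinarith [hstep n, hu0 n]
    exact le_of_mul_le_mul_right h2 hn1
  have hv : Summable (fun k : ℕ => |t (3 * k)| * R ^ (3 * k) +
      |t (3 * k + 1)| * R ^ (3 * k + 1) + |t (3 * k + 2)| * R ^ (3 * k + 2)) := by
    apply summable_of_ratio_norm_eventually_le (r := 1 / 2) (by norm_num)
    filter_upwards [eventually_ge_atTop N] with k hk
    rw [show 3 * (k + 1) = 3 * k + 3 by omega]
    rw [show 3 * k + 3 + 1 = (3 * k + 1) + 3 by omega]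
    rw [show 3 * k + 3 + 2 = (3 * k + 2) + 3 by omega]
    have p1 : (0:ℝ) ≤ |t (3 * k + 3)| * R ^ (3 * k + 3) +
        |t (3 * k + 1 + 3)| * R ^ (3 * k + 1 + 3) +
        |t (3 * k + 2 + 3)| * R ^ (3 * k + 2 + 3) := by positivity
    have p2 : (0:ℝ) ≤ |t (3 * k)| * R ^ (3 * k) + |t (3 * k + 1)| * R ^ (3 * k + 1) +
        |t (3 * k + 2)| * R ^ (3 * k + 2) := by positivity
    rw [Real.norm_eq_abs, Real.norm_eq_abs, abs_of_nonneg p1, abs_of_nonneg p2]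
    have b0 := hhalf (3 * k) (by omega)
    have b1 := hhalf (3 * k + 1) (by omega)
    have b2 := hhalf (3 * k + 2) (by omega)
    linarith
  have hsum3 : ∀ m : ℕ, ∑ i ∈ Finset.range (3 * m), |t i| * R ^ i =
      ∑ k ∈ Finset.range m, (|t (3 * k)| * R ^ (3 * k) +
        |t (3 * k + 1)| * R ^ (3 * k + 1) + |t (3 * k + 2)| * R ^ (3 * k + 2)) := by
    intro m
    induction m with
    | zero => simp
    | succ m ih =>
      rw [show 3 * (m + 1) = 3 * m + 1 + 1 + 1 by omega]
      rw [Finset.sum_range_succ, Finset.sum_range_succ, Finset.sum_range_succ, ih,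
        Finset.sum_range_succ]
      rw [show 3 * m + 1 + 1 = 3 * m + 2 by omega]
      ring
  apply summable_of_sum_range_le hu0
  intro m
  calc ∑ i ∈ Finset.range m, |t i| * R ^ i
      ≤ ∑ i ∈ Finset.range (3 * m), |t i| * R ^ i :=
        Finset.sum_le_sum_of_subset_of_nonneg
          (Finset.range_subset_range.mpr (by omega)) (fun i _ _ => hu0 i)
    _ = _ := hsum3 m
    _ ≤ _ := Summable.sum_le_tsum _ (fun i _ => by positivity) hv

theorem Good.summable {K : ℝ} {t : ℕ → ℝ} (h : Good K t) (x : ℝ) :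
    Summable (fun n : ℕ => t n * x ^ n) := by
  apply Summable.of_abs
  have := h.summable_abs |x| (abs_nonneg x)
  simpa [abs_mul, abs_pow] using this

theorem Good.hasDerivAt_F {K : ℝ} {t : ℕ → ℝ} (h : Good K t) (hK : 0 ≤ K) (x : ℝ) :
    HasDerivAt (F t) (F (dcoef t) x) x := by
  set R := |x| + 1 with hRdef
  have hR : (0:ℝ) ≤ R := by positivity
  have hball : x ∈ Metric.ball (0 : ℝ) R := by
    simp only [Metric.mem_ball, Real.dist_eq, sub_zero, hRdef]
    linarith [abs_nonneg x]
  have hsum' : Summable (fun n : ℕ => |dcoef t n| * R ^ n) :=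
    (h.der hK).summable_abs R hR
  apply hasDerivAt_of_tendstoUniformlyOn (l := atTop)
    (f := fun (N : ℕ) (y : ℝ) => ∑ n ∈ Finset.range (N + 1), t n * y ^ n)
    (f' := fun (N : ℕ) (y : ℝ) => ∑ n ∈ Finset.range N, dcoef t n * y ^ n)
    (Metric.isOpen_ball) ?_ ?_ ?_ hball
  · -- uniform convergence of the derivatives
    have := tendstoUniformlyOn_tsum_nat hsum'
      (f := fun (n : ℕ) (y : ℝ) => dcoef t n * y ^ n) (s := Metric.ball (0:ℝ) R) ?_
    · exact this
    · intro n y hy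
      simp only [Metric.mem_ball, Real.dist_eq, sub_zero] at hy
      rw [Real.norm_eq_abs, abs_mul, abs_pow]
      exact mul_le_mul_of_nonneg_left
        (pow_le_pow_left₀ (abs_nonneg y) (le_of_lt hy) n) (abs_nonneg _)
  · -- derivatives of the partial sums
    filter_upwards with N y _
    have base : HasDerivAt (fun y : ℝ => ∑ n ∈ Finset.range (N + 1), t n * y ^ n)
        (∑ n ∈ Finset.range (N + 1), t n * ((n : ℝ) * y ^ (n - 1))) y := by
      apply HasDerivAt.fun_sum
      intro n _
      exact (hasDerivAt_pow n y).const_mul (t n)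
    refine base.congr_deriv ?_
    rw [Finset.sum_range_succ']
    simp only [dcoef, Nat.cast_zero, pow_zero, Nat.add_sub_cancel]
    push_cast
    simp only [zero_mul, mul_zero, add_zero]
    exact Finset.sum_congr rfl fun i _ => by ring
  · -- pointwise convergence
    intro y _
    have hs : Summable (fun n : ℕ => t n * y ^ n) := h.summable y
    have := hs.hasSum.tendsto_sum_nat
    exact this.comp (tendsto_add_atTop_nat 1)

theorem Good.continuous_F {K : ℝ} {t : ℕ → ℝ} (h : Good K t) (hK : 0 ≤ K) :
    Continuous (F t) :=
  continuous_iff_continuousAt.2 fun x => (h.hasDerivAt_F hK x).continuousAt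

noncomputable def coef (g : ℝ → ℝ) (n : ℕ) : ℝ :=
  (-1 : ℝ) ^ n / n.factorial * Real.Gamma ((1 + n) / 3) * g (Real.pi * (1 + n) / 3) *
    (3 : ℝ) ^ (((n : ℝ) - 2) / 3)

theorem coef_rec (g : ℝ → ℝ) (hg : ∀ x : ℝ, g (x + Real.pi) = -g x) (n : ℕ) :
    coef g (n + 3) = coef g n * (1 / (((n : ℝ) + 2) * ((n : ℝ) + 3))) := by
  have hne : (1 + (n : ℝ)) / 3 ≠ 0 := by positivity
  have hfac : (((n + 3).factorial : ℝ)) =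
      ((n : ℝ) + 1) * ((n : ℝ) + 2) * ((n : ℝ) + 3) * (n.factorial : ℝ) := by
    rw [show n + 3 = n + 1 + 1 + 1 by omega]
    rw [Nat.factorial_succ, Nat.factorial_succ, Nat.factorial_succ]
    push_cast
    ring
  have hfacne : ((n.factorial : ℝ)) ≠ 0 := by
    exact_mod_cast n.factorial_ne_zero
  unfold coef
  rw [hfac]
  push_cast
  rw [show (1 + ((n : ℝ) + 3)) / 3 = (1 + (n : ℝ)) / 3 + 1 by ring,
    Real.Gamma_add_one hne,
    show Real.pi * (1 + ((n : ℝ) + 3)) / 3 = Real.pi * (1 + (n : ℝ)) / 3 + Real.pi by ring,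
    hg,
    show (((n : ℝ) + 3) - 2) / 3 = ((n : ℝ) - 2) / 3 + 1 by ring,
    Real.rpow_add (by norm_num : (0 : ℝ) < 3), Real.rpow_one,
    show n + 3 = n + 1 + 1 + 1 by omega, pow_succ, pow_succ, pow_succ]
  have h1 : ((n : ℝ) + 1) ≠ 0 := by positivity
  have h2 : ((n : ℝ) + 2) ≠ 0 := by positivity
  have h3 : ((n : ℝ) + 3) ≠ 0 := by positivity
  field_simp
  ring

theorem Phi_eq (x : ℝ) : Phi 2 x = (1 / Real.pi) * F (coef Real.sin) x := by
  unfold Phi F coef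
  congr 1
  apply tsum_congr
  intro n
  norm_num

theorem Psi_eq (x : ℝ) : Psi 2 x = (1 / Real.pi) * F (coef Real.cos) x := by
  unfold Psi F coef
  congr 1
  apply tsum_congr
  intro n
  norm_num

theorem good_coef (g : ℝ → ℝ) (hg : ∀ x : ℝ, g (x + Real.pi) = -g x) :
    Good 1 (coef g) := by
  intro n
  refine ⟨1 / (((n : ℝ) + 2) * ((n : ℝ) + 3)), coef_rec g hg n, ?_⟩
  have h1 : (0 : ℝ) < ((n : ℝ) + 2) * ((n : ℝ) + 3) := by positivity
  rw [abs_of_nonneg (by positivity)]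
  rw [div_mul_eq_mul_div, div_le_one h1]
  nlinarith [Nat.cast_nonneg (α := ℝ) n]

/-- The second-derivative shift identity. -/
theorem F_ddcoef (g : ℝ → ℝ) (hg : ∀ x : ℝ, g (x + Real.pi) = -g x)
    (hsum : ∀ x : ℝ, Summable fun n : ℕ => dcoef (dcoef (coef g)) n * x ^ n) (x : ℝ) :
    F (dcoef (dcoef (coef g))) x = 2 * coef g 2 + x * F (coef g) x := by
  have hshift : ∀ n : ℕ, dcoef (dcoef (coef g)) (n + 1) = coef g n := by
    intro n
    unfold dcoef
    rw [show n + 1 + 1 + 1 = n + 3 by omega, coef_rec g hg n]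
    push_cast
    have h2 : ((n : ℝ) + 2) ≠ 0 := by positivity
    have h3 : ((n : ℝ) + 3) ≠ 0 := by positivity
    field_simp
    ring
  unfold F
  rw [Summable.tsum_eq_zero_add (hsum x)]
  have e0 : dcoef (dcoef (coef g)) 0 * x ^ 0 = 2 * coef g 2 := by
    unfold dcoef; norm_num
  rw [e0]
  congr 1
  have : ∀ n : ℕ, dcoef (dcoef (coef g)) (n + 1) * x ^ (n + 1) = x * (coef g n * x ^ n) := by
    intro n; rw [hshift n]; ring
  rw [tsum_congr this, tsum_mul_left]

theorem coef_sin_two : coef Real.sin 2 = 0 := by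
  unfold coef
  have : Real.pi * (1 + (2 : ℕ)) / 3 = Real.pi := by push_cast; ring
  rw [this, Real.sin_pi]
  ring

theorem coef_cos_two : (2 : ℝ) * coef Real.cos 2 = -1 := by
  unfold coef
  have : Real.pi * (1 + (2 : ℕ)) / 3 = Real.pi := by push_cast; ring
  rw [this, Real.cos_pi]
  have : (1 + ((2:ℕ) : ℝ)) / 3 = 1 := by push_cast; ring
  rw [this, Real.Gamma_one]
  have : (((2:ℕ) : ℝ) - 2) / 3 = 0 := by push_cast; ring
  rw [this, Real.rpow_zero]
  norm_num [Nat.factorial]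

theorem w_zero :
    coef Real.cos 1 * coef Real.sin 0 - coef Real.sin 1 * coef Real.cos 0 = Real.pi / 3 := by
  unfold coef
  have hsin : Real.sin (Real.pi * (1 / 3)) ≠ 0 := by
    have h1 : (0 : ℝ) < Real.pi * (1 / 3) := by positivity
    have h2 : Real.pi * (1 / 3) < Real.pi := by nlinarith [Real.pi_pos]
    exact ne_of_gt (Real.sin_pos_of_pos_of_lt_pi h1 h2)
  have hG : Real.Gamma (1 / 3) * Real.Gamma (1 - 1 / 3) =
      Real.pi / Real.sin (Real.pi * (1 / 3)) := Real.Gamma_mul_Gamma_one_sub (1 / 3)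
  have h3 : (3:ℝ) ^ ((((1:ℕ) : ℝ) - 2) / 3) * (3:ℝ) ^ ((((0:ℕ) : ℝ) - 2) / 3) = 1 / 3 := by
    rw [← Real.rpow_add (by norm_num : (0:ℝ) < 3)]
    push_cast
    rw [show ((1:ℝ) - 2) / 3 + ((0:ℝ) - 2) / 3 = -1 by ring]
    rw [Real.rpow_neg_one]
    norm_num
  have htrig : Real.cos (Real.pi * (1 + ((1:ℕ):ℝ)) / 3) * Real.sin (Real.pi * (1 + ((0:ℕ):ℝ)) / 3)
      - Real.sin (Real.pi * (1 + ((1:ℕ):ℝ)) / 3) * Real.cos (Real.pi * (1 + ((0:ℕ):ℝ)) / 3)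
      = -Real.sin (Real.pi * (1 / 3)) := by
    have := Real.sin_sub (Real.pi * (1 + ((1:ℕ):ℝ)) / 3) (Real.pi * (1 + ((0:ℕ):ℝ)) / 3)
    rw [show Real.pi * (1 + ((1:ℕ):ℝ)) / 3 - Real.pi * (1 + ((0:ℕ):ℝ)) / 3
        = Real.pi * (1 / 3) by push_cast; ring] at this
    linarith
  have e1 : (1 + ((0:ℕ) : ℝ)) / 3 = 1 / 3 := by norm_num
  have e2 : (1 + ((1:ℕ) : ℝ)) / 3 = 1 - 1 / 3 := by norm_num
  rw [e1, e2]
  simp only [Nat.factorial_zero, Nat.factorial_one, Nat.cast_one, pow_zero, pow_one]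
  norm_num
  rw [show Real.pi * 2 / 3 = Real.pi - Real.pi / 3 by ring, Real.sin_pi_sub, Real.cos_pi_sub,
    Real.sin_pi_div_three, Real.cos_pi_div_three]
  have hab : (3:ℝ) ^ (-(1/3) : ℝ) * (3:ℝ) ^ (-(2/3) : ℝ) = 1/3 := by
    rw [← Real.rpow_add (by norm_num : (0:ℝ) < 3),
      show (-(1/3) + -(2/3) : ℝ) = -1 by ring, Real.rpow_neg_one]
    norm_num
  have key : Real.Gamma (1/3) * Real.Gamma (2/3) * Real.sqrt 3 = 2 * Real.pi := by
    have hG2 : Real.Gamma (1/3) * Real.Gamma (1 - 1/3) =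
        Real.pi / Real.sin (Real.pi * (1/3)) := Real.Gamma_mul_Gamma_one_sub (1/3)
    rw [show (1:ℝ) - 1/3 = 2/3 by norm_num, show Real.pi * (1/3) = Real.pi/3 by ring,
      Real.sin_pi_div_three] at hG2
    have h2 : Real.sqrt 3 ≠ 0 := by positivity
    rw [hG2]
    field_simp
  linear_combination (Real.sqrt 3 / 2 * (Real.Gamma (1/3) * Real.Gamma (2/3))) * hab
    + (1/6 : ℝ) * key

end WronAux

noncomputable def tc : ℕ → ℝ := WronAux.coef Real.sin
noncomputable def td : ℕ → ℝ := WronAux.coef Real.cos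

open WronAux in
/-- For every real `λ`,
`Ψ₂'(λ) Φ₂(λ) − Φ₂'(λ) Ψ₂(λ) = 1/(3π) − (1/π) ∫_0^λ Φ₂(x) dx`. -/
theorem wronskian_phi_psi_two (l : ℝ) :
    deriv (Psi 2) l * Phi 2 l - deriv (Phi 2) l * Psi 2 l =
      1 / (3 * Real.pi) - (1 / Real.pi) * ∫ x in (0 : ℝ)..l, Phi 2 x := by
  have Gc : Good 1 tc := good_coef _ Real.sin_add_pi
  have Gd : Good 1 td := good_coef _ Real.cos_add_pi
  have Gc' : Good (2 * 1) (dcoef tc) := Gc.der (by norm_num : (0:ℝ) ≤ 1)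
  have Gd' : Good (2 * 1) (dcoef td) := Gd.der (by norm_num : (0:ℝ) ≤ 1)
  have hPhi : Phi 2 = fun x => (1 / Real.pi) * F tc x := funext Phi_eq
  have hPsi : Psi 2 = fun x => (1 / Real.pi) * F td x := funext Psi_eq
  -- the two ODEs
  have hODEc : ∀ x : ℝ, F (dcoef (dcoef tc)) x = x * F tc x := by
    intro x
    rw [show F (dcoef (dcoef tc)) x = 2 * coef Real.sin 2 + x * F tc x from
      F_ddcoef Real.sin Real.sin_add_pi
        (fun y => (Gc'.der (by norm_num)).summable y) x, coef_sin_two]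
    ring
  have hODEd : ∀ x : ℝ, F (dcoef (dcoef td)) x = -1 + x * F td x := by
    intro x
    rw [show F (dcoef (dcoef td)) x = 2 * coef Real.cos 2 + x * F td x from
      F_ddcoef Real.cos Real.cos_add_pi
        (fun y => (Gd'.der (by norm_num)).summable y) x, coef_cos_two]
  -- the Wronskian-type function and its derivative
  have hw : ∀ x : ℝ, HasDerivAt
      (fun y => F (dcoef td) y * F tc y - F (dcoef tc) y * F td y) (-(F tc x)) x := by
    intro x
    have hA := Gd'.hasDerivAt_F (by norm_num) x
    have hB := Gc.hasDerivAt_F (by norm_num : (0:ℝ) ≤ 1) x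
    have hC := Gc'.hasDerivAt_F (by norm_num) x
    have hD := Gd.hasDerivAt_F (by norm_num : (0:ℝ) ≤ 1) x
    have h := (hA.mul hB).sub (hC.mul hD)
    refine h.congr_deriv ?_
    rw [hODEc x, hODEd x]
    ring
  have hcont : Continuous (F tc) := Gc.continuous_F (by norm_num : (0:ℝ) ≤ 1)
  have hFTC : ∫ x in (0:ℝ)..l, -(F tc x) =
      (F (dcoef td) l * F tc l - F (dcoef tc) l * F td l) -
      (F (dcoef td) 0 * F tc 0 - F (dcoef tc) 0 * F td 0) :=
    intervalIntegral.integral_eq_sub_of_hasDerivAt (fun x _ => hw x)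
      ((hcont.neg).intervalIntegrable 0 l)
  have hF0 : ∀ t : ℕ → ℝ, F t 0 = t 0 := by
    intro t
    unfold F
    rw [tsum_eq_single 0 (fun n hn => by simp [zero_pow hn])]
    simp
  have hw0 : F (dcoef td) 0 * F tc 0 - F (dcoef tc) 0 * F td 0 = Real.pi / 3 := by
    rw [hF0, hF0, hF0, hF0]
    show dcoef td 0 * tc 0 - dcoef tc 0 * td 0 = Real.pi / 3
    unfold dcoef
    push_cast
    rw [zero_add, one_mul, one_mul]
    exact w_zero
  have hwl : F (dcoef td) l * F tc l - F (dcoef tc) l * F td l =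
      Real.pi / 3 - ∫ x in (0:ℝ)..l, F tc x := by
    rw [intervalIntegral.integral_neg] at hFTC
    linarith [hFTC, hw0]
  have hdPhi : deriv (Phi 2) l = (1 / Real.pi) * F (dcoef tc) l := by
    rw [hPhi]
    exact ((Gc.hasDerivAt_F (by norm_num : (0:ℝ) ≤ 1) l).const_mul (1 / Real.pi)).deriv
  have hdPsi : deriv (Psi 2) l = (1 / Real.pi) * F (dcoef td) l := by
    rw [hPsi]
    exact ((Gd.hasDerivAt_F (by norm_num : (0:ℝ) ≤ 1) l).const_mul (1 / Real.pi)).deriv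
  have hint : ∫ x in (0:ℝ)..l, Phi 2 x = (1 / Real.pi) * ∫ x in (0:ℝ)..l, F tc x := by
    simp only [hPhi]
    exact intervalIntegral.integral_const_mul _ _
  rw [hdPhi, hdPsi, hint, hPhi, hPsi]
  have hpi : Real.pi ≠ 0 := Real.pi_ne_zero
  rw [show (1:ℝ) / (3 * Real.pi) = 1 / Real.pi ^ 2 * (Real.pi / 3) by
    field_simp]
  linear_combination (1 / Real.pi ^ 2) * hwl
end
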